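/- Let x₁,…,xₙ be the elements of a finite lattice (P, ≤), let f : P → ℂ be a function, and let A be the n×n matrix with entries a_{ij} = f(xᵢ ∧ xⱼ). Then det(A) = ∏_{i=1}^n ∑_{x_k ≤ x_i} f(x_k) μ(x_k, x_i), where μ is the Möbius function of P. -/

import Mathlib

open Finset Classical in
/-- Let `x₁, …, xₙ` enumerate a finite lattice `P`, let `f : P → ℂ`, and let `A` be the
matrix with `A i j = f (xᵢ ⊓ xⱼ)`.  Then `det A = ∏ᵢ ∑_{z ≤ xᵢ} f z · μ(z, xᵢ)`, where `μ`
is the Möbius function of `P`, characterised by `μ a a = 1`,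
`μ a b = -∑_{a ≤ z < b} μ a z` for `a < b`, and `μ a b = 0` when `¬ a ≤ b`. -/
theorem stmt2 {P : Type} [Lattice P] [Fintype P]
    (n : ℕ) (x : Fin n → P) (hx : Function.Bijective x)
    (f : P → ℂ) (μ : P → P → ℂ)
    (hrefl : ∀ a, μ a a = 1)
    (hlt : ∀ a b, a < b →
      μ a b = -∑ z ∈ Finset.univ.filter (fun z => a ≤ z ∧ z < b), μ a z)
    (hnle : ∀ a b, ¬ a ≤ b → μ a b = 0) :
    (Matrix.of fun i j : Fin n => f (x i ⊓ x j)).det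
      = ∏ i : Fin n, ∑ z ∈ Finset.univ.filter (fun z => z ≤ x i), f z * μ z (x i) := by
  classical
  set g : P → ℂ := fun y => ∑ z ∈ univ.filter (fun z => z ≤ y), f z * μ z y with hg
  -- Möbius identity
  have mob : ∀ z w : P, z ≤ w →
      (∑ y ∈ univ.filter (fun y => z ≤ y ∧ y ≤ w), μ z y) = if z = w then 1 else 0 := by
    intro z w hzw
    by_cases h : z = w
    · subst h
      have hs : univ.filter (fun y => z ≤ y ∧ y ≤ z) = {z} := by
        ext y
        simp only [mem_filter, mem_univ, true_and, mem_singleton]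
        constructor
        · rintro ⟨h1, h2⟩; exact le_antisymm h2 h1
        · rintro rfl; exact ⟨le_rfl, le_rfl⟩
      rw [hs, Finset.sum_singleton, hrefl, if_pos rfl]
    · have hlt' : z < w := lt_of_le_of_ne hzw h
      rw [if_neg h]
      have split : univ.filter (fun y => z ≤ y ∧ y ≤ w)
          = insert w (univ.filter (fun y => z ≤ y ∧ y < w)) := by
        ext y
        simp only [mem_insert, mem_filter, mem_univ, true_and]
        constructor
        · rintro ⟨h1, h2⟩
          rcases eq_or_lt_of_le h2 with h3 | h3
          · exact Or.inl h3
          · exact Or.inr ⟨h1, h3⟩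
        · rintro (rfl | ⟨h1, h2⟩)
          · exact ⟨hzw, le_rfl⟩
          · exact ⟨h1, h2.le⟩
      rw [split, Finset.sum_insert (by simp), hlt z w hlt']
      ring
  -- key inversion
  have key : ∀ w : P, (∑ y ∈ univ.filter (fun y => y ≤ w), g y) = f w := by
    intro w
    simp only [hg]
    simp only [Finset.sum_filter]
    have swap : (∑ a : P, if a ≤ w then ∑ b : P, if b ≤ a then f b * μ b a else 0 else 0)
        = ∑ b : P, ∑ a : P, if a ≤ w then (if b ≤ a then f b * μ b a else 0) else 0 := by
      rw [← Finset.sum_comm]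
      refine Finset.sum_congr rfl fun a _ => ?_
      split_ifs with h
      · rfl
      · simp
    rw [swap]
    have step : ∀ z : P,
        (∑ y : P, if y ≤ w then (if z ≤ y then f z * μ z y else 0) else 0)
          = f z * (if z = w then 1 else 0) := by
      intro z
      have : (∑ y : P, if y ≤ w then (if z ≤ y then f z * μ z y else 0) else 0)
          = ∑ y ∈ univ.filter (fun y => z ≤ y ∧ y ≤ w), f z * μ z y := by
        rw [Finset.sum_filter]
        refine Finset.sum_congr rfl fun y _ => ?_
        split_ifs <;> tauto
      rw [this, ← Finset.mul_sum]
      by_cases hz : z ≤ w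
      · rw [mob z w hz]
      · rw [if_neg (by rintro rfl; exact hz le_rfl)]
        rw [Finset.sum_eq_zero (fun y hy => by
          simp only [mem_filter, mem_univ, true_and] at hy
          exact absurd (hy.1.trans hy.2) hz)]
    rw [Finset.sum_congr rfl fun z _ => step z]
    simp
  -- matrices
  set L : Matrix (Fin n) (Fin n) ℂ := Matrix.of fun i j => if x j ≤ x i then (1 : ℂ) else 0 with hL
  set D : Matrix (Fin n) (Fin n) ℂ := Matrix.diagonal (fun k => g (x k)) with hD
  have hLD : (L * D) = Matrix.of fun i k => (if x k ≤ x i then (1:ℂ) else 0) * g (x k) := by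
    ext i k
    simp [hL, hD, Matrix.mul_diagonal]
  have factor : (Matrix.of fun i j : Fin n => f (x i ⊓ x j)) = L * D * L.transpose := by
    ext i j
    rw [Matrix.mul_apply]
    rw [hLD]
    simp only [hLD, Matrix.of_apply, Matrix.transpose_apply, hL]
    have e1 : ∀ k : Fin n,
        (if x k ≤ x i then (1:ℂ) else 0) * g (x k) * (if x k ≤ x j then (1:ℂ) else 0)
          = if x k ≤ x i ⊓ x j then g (x k) else 0 := by
      intro k
      by_cases h1 : x k ≤ x i <;> by_cases h2 : x k ≤ x j <;>
        simp [h1, h2, le_inf_iff]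
    rw [Finset.sum_congr rfl fun k _ => e1 k]
    have e2 : (∑ k : Fin n, if x k ≤ x i ⊓ x j then g (x k) else 0)
        = ∑ z : P, if z ≤ x i ⊓ x j then g z else 0 :=
      Fintype.sum_bijective x hx _ _ (fun k => rfl)
    rw [e2, ← Finset.sum_filter, key]
  -- determinant of L is 1
  have hcard : Fintype.card P = n := by
    rw [← Fintype.card_fin n]
    exact (Fintype.card_of_bijective hx).symm
  letI : Fintype (LinearExtension P) := ‹Fintype P›
  have hcard' : Fintype.card (LinearExtension P) = n := hcard
  let m : Fin n ≃o LinearExtension P := monoEquivOfFin _ hcard'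
  let y : Fin n → P := fun i => (m i : P)
  have hy : Function.Bijective y := m.toEquiv.bijective
  have hmono : ∀ i j : Fin n, y i ≤ y j → i ≤ j := by
    intro i j h
    have h2 : toLinearExtension (y i) ≤ toLinearExtension (y j) := toLinearExtension.monotone h
    have h3 : m i ≤ m j := h2
    exact m.le_iff_le.mp h3
  let e : Fin n ≃ Fin n := (Equiv.ofBijective y hy).trans (Equiv.ofBijective x hx).symm
  have hxe : ∀ k, x (e k) = y k := fun k =>
    (Equiv.ofBijective x hx).apply_symm_apply (y k)
  have hdetL : L.det = 1 := by
    rw [← Matrix.det_submatrix_equiv_self e L]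
    rw [Matrix.det_of_lowerTriangular]
    · rw [Finset.prod_eq_one]
      intro i _
      simp [hL, hxe]
    · intro i j hij
      simp only [Matrix.submatrix_apply, hL, Matrix.of_apply, hxe]
      rw [if_neg]
      intro hle
      exact absurd (hmono _ _ hle) (not_le.mpr hij)
  rw [factor, Matrix.det_mul, Matrix.det_mul, Matrix.det_transpose, hdetL,
    Matrix.det_diagonal, one_mul, mul_one]
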